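/- Let x be an infinite word. Then x is rich if and only if for each non-empty palindromic factor p of x, every complete return to p in x is a palindrome. -/
import Mathlib


/-- The finset of (distinct) palindromic factors of a finite word `w`,
including the empty word. -/
def palFactors {A : Type*} [DecidableEq A] (w : List A) : Finset (List A) :=
  ((w.inits.flatMap List.tails).filter (fun u => u.reverse = u)).toFinset

/-- A finite word `w` is rich if it has exactly `|w| + 1` distinct palindromic factors. -/
def Rich {A : Type*} [DecidableEq A] (w : List A) : Prop :=
  (palFactors w).card = w.length + 1

/-- A finite word `u` is a factor of the infinite word `x : ℕ → A` if it occurs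
at some position `i` in `x`. -/
def FactorOfInf {A : Type*} (u : List A) (x : ℕ → A) : Prop :=
  ∃ i : ℕ, u = (List.range u.length).map fun k => x (i + k)

/-- An infinite word is rich if all of its factors are rich. -/
def RichInf {A : Type*} [DecidableEq A] (x : ℕ → A) : Prop :=
  ∀ u : List A, FactorOfInf u x → Rich u

/-- `r` is a complete return to `u` if `u` is both a prefix and a suffix of `r`
and `r` has exactly two occurrences of `u`. -/
def CompleteReturn {A : Type*} (u r : List A) : Prop :=
  u <+: r ∧ u <:+ r ∧ {st : List A × List A | r = st.1 ++ u ++ st.2}.ncard = 2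

section Aux
variable {A : Type*} [DecidableEq A]

lemma mem_palFactors {w u : List A} :
    u ∈ palFactors w ↔ u <:+: w ∧ u.reverse = u := by
  simp only [palFactors, List.mem_toFinset, List.mem_filter, List.mem_flatMap,
    List.mem_inits, List.mem_tails, decide_eq_true_eq]
  constructor
  · rintro ⟨⟨p, hp, hu⟩, hpal⟩
    exact ⟨hu.isInfix.trans hp.isInfix, hpal⟩
  · rintro ⟨hinf, hpal⟩
    obtain ⟨s, t, hst⟩ := hinf
    exact ⟨⟨s ++ u, ⟨t, by simpa [List.append_assoc] using hst⟩, ⟨s, rfl⟩⟩, hpal⟩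

lemma palFactors_mono {w v : List A} (h : w <:+: v) : palFactors w ⊆ palFactors v := by
  intro u hu
  rw [mem_palFactors] at hu ⊢
  exact ⟨hu.1.trans h, hu.2⟩

end Aux

section Occ
variable {A : Type*} [DecidableEq A]

/-- Positions at which `u` occurs in `r`. -/
def occs (u r : List A) : Finset ℕ :=
  (Finset.range (r.length + 1)).filter (fun i => u <+: r.drop i)

lemma mem_occs {u r : List A} (hu : u ≠ []) {i : ℕ} :
    i ∈ occs u r ↔ u <+: r.drop i := by
  simp only [occs, Finset.mem_filter, Finset.mem_range, and_iff_right_iff_imp]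
  intro h
  have h1 := h.length_le
  rw [List.length_drop] at h1
  have : 0 < u.length := List.length_pos_iff.mpr hu
  omega

lemma mem_occs_le {u r : List A} (hu : u ≠ []) {i : ℕ} (h : i ∈ occs u r) :
    i + u.length ≤ r.length := by
  rw [mem_occs hu] at h
  have h1 := h.length_le
  rw [List.length_drop] at h1
  have h2 : 0 < u.length := List.length_pos_iff.mpr hu
  omega

omit [DecidableEq A] in
lemma drop_eq_of_occ {u r : List A} {i : ℕ} (h : u <+: r.drop i) :
    r.drop i = u ++ r.drop (i + u.length) := by
  obtain ⟨t', ht'⟩ := h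
  have : t' = r.drop (i + u.length) := by
    have : t' = (r.drop i).drop u.length := by
      rw [← ht', List.drop_left]
    rw [this, List.drop_drop]
  rw [← ht', this]

lemma ncard_pairs_eq_card_occs (u r : List A) (hu : u ≠ []) :
    {st : List A × List A | r = st.1 ++ u ++ st.2}.ncard = (occs u r).card := by
  have himg : {st : List A × List A | r = st.1 ++ u ++ st.2} =
      (fun i => (r.take i, r.drop (i + u.length))) '' (occs u r : Set ℕ) := by
    ext ⟨s, t⟩
    simp only [Set.mem_setOf_eq, Set.mem_image, Finset.mem_coe, Prod.mk.injEq]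
    constructor
    · intro h
      refine ⟨s.length, ?_, ?_, ?_⟩
      · rw [mem_occs hu, h]
        simp only [List.append_assoc, List.drop_left]
        exact ⟨t, rfl⟩
      · rw [h]; simp [List.append_assoc]
      · rw [h]
        have h2 : s.length + u.length = (s ++ u).length := by simp
        rw [h2, List.drop_left]
    · rintro ⟨i, hi, hs, ht⟩
      rw [mem_occs hu] at hi
      rw [← hs, ← ht]
      calc r = r.take i ++ r.drop i := (List.take_append_drop i r).symm
        _ = r.take i ++ u ++ r.drop (i + u.length) := by
            rw [drop_eq_of_occ hi, List.append_assoc]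
  rw [himg, Set.ncard_image_of_injOn, Set.ncard_coe_finset]
  intro i hi j hj hij
  simp only [Finset.mem_coe] at hi hj
  have hi' := mem_occs_le hu hi
  have hj' := mem_occs_le hu hj
  have h2 := congrArg (fun p => p.1.length) hij
  simp only [List.length_take] at h2
  omega

end Occ

section Lps
variable {A : Type*} [DecidableEq A]

omit [DecidableEq A] in
lemma exists_lps (w : List A) (hw : w ≠ []) :
    ∃ q : List A, q <:+ w ∧ q.reverse = q ∧ q ≠ [] ∧
      ∀ p, p <:+ w → p.reverse = p → p.length ≤ q.length := by
  classical
  have hex : ∃ i, i < w.length ∧ (w.drop i).reverse = w.drop i := by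
    refine ⟨w.length - 1, by have := List.length_pos_iff.mpr hw; omega, ?_⟩
    have hlen : (w.drop (w.length - 1)).length = 1 := by
      rw [List.length_drop]; have := List.length_pos_iff.mpr hw; omega
    obtain ⟨a, ha⟩ := List.length_eq_one_iff.mp hlen
    rw [ha]; rfl
  let j := Nat.find hex
  obtain ⟨hj1, hj2⟩ := Nat.find_spec hex
  refine ⟨w.drop j, List.drop_suffix j w, hj2, ?_, ?_⟩
  · intro hnil
    have := congrArg List.length hnil
    rw [List.length_drop] at this
    simp at this; omega
  · intro p hp hpal
    rcases eq_or_ne p [] with rfl | hpne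
    · simp
    · have hple := hp.length_le
      have hppos := List.length_pos_iff.mpr hpne
      have hpd : p = w.drop (w.length - p.length) := List.suffix_iff_eq_drop.mp hp
      have : j ≤ w.length - p.length := by
        apply Nat.find_min' hex
        exact ⟨by omega, by rw [← hpd, hpal]⟩
      rw [List.length_drop]
      omega

end Lps

section Step
variable {A : Type*} [DecidableEq A]

omit [DecidableEq A] in
lemma infix_append_singleton {u w : List A} {a : A} (h : u <:+: w ++ [a]) :
    u <:+: w ∨ u <:+ w ++ [a] := by
  obtain ⟨s, t, hst⟩ := h
  rcases eq_or_ne t [] with rfl | htne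
  · right; exact ⟨s, by simpa using hst⟩
  · left
    have hdl := congrArg List.dropLast hst
    rw [← List.dropLast_append_getLast htne] at hdl
    rw [show s ++ u ++ (t.dropLast ++ [t.getLast htne]) =
      (s ++ u ++ t.dropLast) ++ [t.getLast htne] by simp [List.append_assoc]] at hdl
    rw [List.dropLast_concat, List.dropLast_concat] at hdl
    exact ⟨s, t.dropLast, by rw [← hdl, List.append_assoc]⟩

omit [DecidableEq A] in
lemma prefix_infix_of_suffix {u q w : List A} (hu : u <+: q) (hq : q <:+ w)
    (hlt : u.length < q.length) : u <:+: w.dropLast := by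
  obtain ⟨s, hs⟩ := hq
  refine ⟨s, (q.drop u.length).dropLast, ?_⟩
  have hqd : q = u ++ q.drop u.length := by
    conv_lhs => rw [← List.take_append_drop u.length q]
    congr 1
    exact (List.prefix_iff_eq_take.mp hu).symm
  have hne : q.drop u.length ≠ [] := by
    intro h
    have := congrArg List.length h
    rw [List.length_drop] at this
    simp at this; omega
  have hw2 : w = (s ++ u ++ (q.drop u.length).dropLast) ++
      [(q.drop u.length).getLast hne] := by
    rw [← hs]
    conv_lhs => rw [hqd, ← List.dropLast_append_getLast hne]
    simp [List.append_assoc]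
  rw [hw2, List.dropLast_concat]

lemma palFactors_step (w : List A) (a : A) {q : List A}
    (hq : q <:+ w ++ [a]) (hqpal : q.reverse = q)
    (hmax : ∀ p, p <:+ w ++ [a] → p.reverse = p → p.length ≤ q.length) :
    palFactors (w ++ [a]) = insert q (palFactors w) := by
  apply Finset.Subset.antisymm
  · intro u hu
    rw [mem_palFactors] at hu
    obtain ⟨hinf, hpal⟩ := hu
    rcases infix_append_singleton hinf with h | h
    · exact Finset.mem_insert_of_mem (mem_palFactors.mpr ⟨h, hpal⟩)
    · have hle : u.length ≤ q.length := hmax u h hpal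
      have husuf : u <:+ q := List.suffix_of_suffix_length_le h hq hle
      rcases eq_or_lt_of_le hle with heq | hlt
      · have huq : u = q := List.IsSuffix.eq_of_length husuf heq
        rw [huq]
        exact Finset.mem_insert_self q _
      · have hupre : u <+: q := by
          rw [← hpal, ← hqpal]
          exact List.reverse_prefix.mpr husuf
        have : u <:+: (w ++ [a]).dropLast := prefix_infix_of_suffix hupre hq hlt
        rw [List.dropLast_concat] at this
        exact Finset.mem_insert_of_mem (mem_palFactors.mpr ⟨this, hpal⟩)
  · intro u hu
    rcases Finset.mem_insert.mp hu with rfl | h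
    · exact mem_palFactors.mpr ⟨hq.isInfix, hqpal⟩
    · exact palFactors_mono ⟨[], [a], by simp⟩ h

end Step

section RichCount
variable {A : Type*} [DecidableEq A]

lemma palFactors_nil : palFactors ([] : List A) = {[]} := by
  ext u
  rw [mem_palFactors]
  simp [List.eq_nil_of_infix_nil]
  aesop

lemma rich_nil : Rich ([] : List A) := by
  simp [Rich, palFactors_nil]

lemma card_palFactors_le (w : List A) : (palFactors w).card ≤ w.length + 1 := by
  induction w using List.reverseRecOn with
  | nil => simp [palFactors_nil]
  | append_singleton w a ih =>
    obtain ⟨q, hq, hqpal, hqne, hmax⟩ := exists_lps (w ++ [a]) (by simp)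
    rw [palFactors_step w a hq hqpal hmax]
    calc (insert q (palFactors w)).card ≤ (palFactors w).card + 1 :=
          Finset.card_insert_le _ _
      _ ≤ w.length + 1 + 1 := by omega
      _ = (w ++ [a]).length + 1 := by simp

lemma rich_append_iff (w : List A) (a : A) {q : List A}
    (hq : q <:+ w ++ [a]) (hqpal : q.reverse = q)
    (hmax : ∀ p, p <:+ w ++ [a] → p.reverse = p → p.length ≤ q.length) :
    Rich (w ++ [a]) ↔ Rich w ∧ q ∉ palFactors w := by
  have hstep := palFactors_step w a hq hqpal hmax
  have hle := card_palFactors_le w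
  constructor
  · intro h
    unfold Rich at h
    rw [hstep] at h
    by_cases hmem : q ∈ palFactors w
    · rw [Finset.insert_eq_self.mpr hmem] at h
      simp at h
      omega
    · rw [Finset.card_insert_of_notMem hmem] at h
      simp at h
      exact ⟨by unfold Rich; omega, hmem⟩
  · rintro ⟨h1, h2⟩
    unfold Rich at h1 ⊢
    rw [hstep, Finset.card_insert_of_notMem h2, h1]
    simp

end RichCount

section Factor
variable {A : Type*}

lemma factor_take_drop {x : ℕ → A} {v : List A} {i : ℕ}
    (hv : v = (List.range v.length).map fun k => x (i + k)) (j m : ℕ) :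
    (v.drop j).take m =
      (List.range ((v.drop j).take m).length).map fun k => x (i + j + k) := by
  apply List.ext_getElem
  · simp
  · intro k hk1 hk2
    have hvk : ∀ n, n < v.length → v[n]? = some (x (i + n)) := by
      intro n hn
      conv_lhs => rw [hv]
      rw [List.getElem?_map, List.getElem?_range (by simpa using hn)]
      rfl
    simp only [List.getElem_map, List.getElem_range]
    rw [List.getElem_take, List.getElem_drop]
    simp only [List.length_take, List.length_drop] at hk1
    have hjk : j + k < v.length := by omega
    have h1 := hvk (j + k) hjk
    rw [List.getElem?_eq_getElem hjk] at h1
    have h2 : v[j + k] = x (i + (j + k)) := by injection h1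
    rw [h2]
    ring_nf

lemma FactorOfInf.of_infix {x : ℕ → A} {u v : List A} (h : u <:+: v)
    (hv : FactorOfInf v x) : FactorOfInf u x := by
  obtain ⟨i, hi⟩ := hv
  obtain ⟨s, t, hst⟩ := h
  have hu : u = (v.drop s.length).take u.length := by
    rw [← hst]
    rw [show s ++ u ++ t = s ++ (u ++ t) by simp [List.append_assoc]]
    rw [List.drop_left, List.take_left]
  refine ⟨i + s.length, ?_⟩
  rw [hu]
  rw [factor_take_drop hi s.length u.length]
  simp

end Factor

section Main
variable {A : Type*} [DecidableEq A]

lemma forward_dir {x : ℕ → A} (hx : RichInf x) :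
    ∀ p : List A, FactorOfInf p x → p ≠ [] → p.reverse = p →
      ∀ r : List A, FactorOfInf r x → CompleteReturn p r → r.reverse = r := by
  intro p hpfac hpne hppal r hrfac ⟨hpre, hsuf, hcount⟩
  rw [ncard_pairs_eq_card_occs p r hpne] at hcount
  have hppos : 0 < p.length := List.length_pos_iff.mpr hpne
  have h0 : 0 ∈ occs p r := by rw [mem_occs hpne]; simpa using hpre
  set j0 := r.length - p.length with hj0
  have hplen : p.length ≤ r.length := hpre.length_le
  have hj0mem : j0 ∈ occs p r := by
    rw [mem_occs hpne]
    rw [← List.suffix_iff_eq_drop.mp hsuf]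
  have hplt : p.length < r.length := by
    rcases lt_or_eq_of_le hplen with h | h
    · exact h
    · exfalso
      have hpr : p = r := List.IsPrefix.eq_of_length hpre h
      have : occs p r = {0} := by
        apply Finset.eq_singleton_iff_unique_mem.mpr
        refine ⟨h0, ?_⟩
        intro i hi
        have := mem_occs_le hpne hi
        omega
      rw [this] at hcount
      simp at hcount
  have hj0pos : 0 < j0 := by omega
  have hocc : occs p r = {0, j0} := by
    symm
    apply Finset.eq_of_subset_of_card_le
    · intro i hi
      simp only [Finset.mem_insert, Finset.mem_singleton] at hi
      rcases hi with rfl | rfl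
      · exact h0
      · exact hj0mem
    · have hne01 : (0 : ℕ) ∉ ({j0} : Finset ℕ) := by
        rw [Finset.mem_singleton]; omega
      rw [hcount, Finset.card_insert_of_notMem hne01, Finset.card_singleton]
  have hrne : r ≠ [] := by intro h; rw [h] at hplt; simp at hplt
  obtain ⟨q, hq, hqpal, hqne, hmax⟩ := exists_lps r hrne
  have hqlen : q.length ≤ r.length := hq.length_le
  -- suffices q = r
  rcases eq_or_lt_of_le hqlen with heq | hlt
  · have : q = r := List.IsSuffix.eq_of_length hq heq
    rw [← this, hqpal]
  · exfalso
    set w := r.dropLast with hw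
    have hra : r = w ++ [r.getLast hrne] := (List.dropLast_append_getLast hrne).symm
    have hwfac : FactorOfInf w x := FactorOfInf.of_infix
      (by rw [hra]; exact (List.prefix_append w _).isInfix) hrfac
    have hrich_r : Rich r := hx r hrfac
    have hrich_w : Rich w := hx w hwfac
    have hq' : q <:+ w ++ [r.getLast hrne] := hra ▸ hq
    have hmax' : ∀ p', p' <:+ w ++ [r.getLast hrne] → p'.reverse = p' →
        p'.length ≤ q.length := by
      intro p' h1 h2; exact hmax p' (hra ▸ h1) h2
    have hnotmem : q ∉ palFactors w := by
      have := (rich_append_iff w (r.getLast hrne) hq' hqpal hmax').mp (hra ▸ hrich_r)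
      exact this.2
    have hwlen : w.length = r.length - 1 := by
      have := congrArg List.length hra
      simp at this; omega
    -- p is a palindromic suffix of r, so p.length ≤ q.length
    have hpq : p.length ≤ q.length := hmax p hsuf hppal
    have hpsufq : p <:+ q := List.suffix_of_suffix_length_le hsuf hq hpq
    rcases eq_or_lt_of_le hpq with hpeq | hplt2
    · -- p = q; but p occurs inside w as a prefix of r
      have hpq2 : p = q := List.IsSuffix.eq_of_length hpsufq hpeq
      apply hnotmem
      rw [← hpq2, mem_palFactors]
      refine ⟨?_, hppal⟩
      have : p <+: w := by
        have hdl : w = r.take (r.length - 1) := by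
          rw [hw, List.dropLast_eq_take]
        rw [hdl]
        rw [List.prefix_take_iff]
        exact ⟨hpre, by omega⟩
      exact this.isInfix
    · -- p is a proper prefix of q, giving a third occurrence
      have hppre : p <+: q := by
        rw [← hppal, ← hqpal]
        exact List.reverse_prefix.mpr hpsufq
      set j := r.length - q.length with hjdef
      have hqd : q = r.drop j := List.suffix_iff_eq_drop.mp hq
      have hjmem : j ∈ occs p r := by
        rw [mem_occs hpne, ← hqd]
        exact hppre
      rw [hocc] at hjmem
      simp only [Finset.mem_insert, Finset.mem_singleton] at hjmem
      rcases hjmem with h | h <;> omega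

end Main

section Back
variable {A : Type*} [DecidableEq A]

lemma backward_dir {x : ℕ → A}
    (H : ∀ p : List A, FactorOfInf p x → p ≠ [] → p.reverse = p →
      ∀ r : List A, FactorOfInf r x → CompleteReturn p r → r.reverse = r) :
    RichInf x := by
  intro u hu
  induction u using List.reverseRecOn with
  | nil => exact rich_nil
  | append_singleton w a ih =>
    have hwfac : FactorOfInf w x :=
      FactorOfInf.of_infix (List.prefix_append w [a]).isInfix hu
    have hrichw : Rich w := ih hwfac
    obtain ⟨q, hq, hqpal, hqne, hmax⟩ := exists_lps (w ++ [a]) (by simp)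
    rw [rich_append_iff w a hq hqpal hmax]
    refine ⟨hrichw, ?_⟩
    intro hmem
    rw [mem_palFactors] at hmem
    obtain ⟨⟨s, t, hst⟩, _⟩ := hmem
    have hqpos : 0 < q.length := List.length_pos_iff.mpr hqne
    have hqlen : q.length ≤ (w ++ [a]).length := hq.length_le
    set N := (w ++ [a]).length with hN
    have hNw : N = w.length + 1 := by simp [hN]
    set j0 := N - q.length with hj0def
    have hj0mem : j0 ∈ occs q (w ++ [a]) := by
      rw [mem_occs hqne, ← List.suffix_iff_eq_drop.mp hq]
    -- occurrence of q inside w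
    have hiocc : s.length ∈ occs q (w ++ [a]) ∧ s.length + q.length ≤ w.length := by
      have hslen : s.length + q.length ≤ w.length := by
        have := congrArg List.length hst
        simp at this; omega
      constructor
      · rw [mem_occs hqne]
        have h1 : w.drop s.length = q ++ t := by
          rw [← hst]
          rw [show s ++ q ++ t = s ++ (q ++ t) by simp [List.append_assoc]]
          rw [List.drop_left]
        have h2 : (w ++ [a]).drop s.length = w.drop s.length ++ [a] := by
          apply List.drop_append_of_le_length
          omega
        rw [h2, h1]
        exact ⟨t ++ [a], by simp [List.append_assoc]⟩
      · exact hslen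
    obtain ⟨himem, hile⟩ := hiocc
    have hij0 : s.length < j0 := by omega
    -- the set of occurrences strictly before j0
    have hSne : ((occs q (w ++ [a])).filter (· < j0)).Nonempty :=
      ⟨s.length, Finset.mem_filter.mpr ⟨himem, hij0⟩⟩
    set m := ((occs q (w ++ [a])).filter (· < j0)).max' hSne with hm
    have hmmem : m ∈ occs q (w ++ [a]) ∧ m < j0 := by
      have h := Finset.max'_mem _ hSne
      rw [Finset.mem_filter] at h
      exact h
    have hmmax : ∀ i ∈ occs q (w ++ [a]), i < j0 → i ≤ m := by
      intro i hi hilt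
      apply Finset.le_max' _ i
      rw [Finset.mem_filter]
      exact ⟨hi, hilt⟩
    set r := (w ++ [a]).drop m with hr
    have hrlen : r.length = N - m := by simp [hr, hN]
    have hrfac : FactorOfInf r x := FactorOfInf.of_infix (List.drop_suffix m _).isInfix hu
    have hqfac : FactorOfInf q x := FactorOfInf.of_infix ⟨s, t, hst⟩ hwfac
    -- shift of occurrences
    have hshift : ∀ i, (i ∈ occs q r ↔ m + i ∈ occs q (w ++ [a])) := by
      intro i
      rw [mem_occs hqne, mem_occs hqne, hr, List.drop_drop]
    have hqprer : q <+: r := by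
      have := hmmem.1
      rw [mem_occs hqne] at this
      exact this
    have hqsufr : q <:+ r := by
      apply List.suffix_of_suffix_length_le hq (hr ▸ List.drop_suffix m _)
      rw [hrlen]; omega
    have hoccr : occs q r = {0, j0 - m} := by
      ext i
      simp only [Finset.mem_insert, Finset.mem_singleton]
      constructor
      · intro hi
        have h1 := (hshift i).mp hi
        have h2 := mem_occs_le hqne h1
        have h3 : m + i ≤ j0 := by omega
        rcases eq_or_lt_of_le h3 with h | h
        · right; omega
        · left
          have := hmmax (m + i) h1 h
          omega
      · rintro (rfl | rfl)
        · rw [hshift]; simpa using hmmem.1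
        · rw [hshift]
          have : m + (j0 - m) = j0 := by omega
          rw [this]; exact hj0mem
    have hcr : CompleteReturn q r := by
      refine ⟨hqprer, hqsufr, ?_⟩
      rw [ncard_pairs_eq_card_occs q r hqne, hoccr]
      rw [Finset.card_insert_of_notMem (by rw [Finset.mem_singleton]; omega),
        Finset.card_singleton]
    have hrpal : r.reverse = r := H q hqfac hqne hqpal r hrfac hcr
    -- r is a palindromic suffix longer than q : contradiction
    have := hmax r (hr ▸ List.drop_suffix m _) hrpal
    rw [hrlen] at this
    omega

end Back


/-- An infinite word `x` is rich if and only if for each non-empty palindromic factor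
`p` of `x`, every complete return to `p` in `x` is a palindrome. -/
theorem richInf_iff_complete_returns_palindromic {A : Type*} [DecidableEq A]
    (x : ℕ → A) :
    RichInf x ↔ ∀ p : List A, FactorOfInf p x → p ≠ [] → p.reverse = p →
      ∀ r : List A, FactorOfInf r x → CompleteReturn p r → r.reverse = r :=
  ⟨forward_dir, backward_dir⟩
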